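/- Let A ∈ ℝ^{m×n×m×n} be a Z-biquadratic tensor (all off-diagonal entries nonpositive). Then A is positive semi-definite if and only if A is an M-biquadratic tensor, and A is positive definite if and only if A is a strong M-biquadratic tensor. -/

import Mathlib

noncomputable section
open Finset

/-- The biquadratic form of a biquadratic tensor. -/
def bqForm {m n : ℕ} (A : Fin m → Fin n → Fin m → Fin n → ℝ)
    (x : Fin m → ℝ) (y : Fin n → ℝ) : ℝ :=
  ∑ i1, ∑ j1, ∑ i2, ∑ j2, A i1 j1 i2 j2 * x i1 * y j1 * x i2 * y j2

/-- (λ, x, y) is an M-eigenpair of the biquadratic tensor A. -/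
def IsMEigenpair {m n : ℕ} (A : Fin m → Fin n → Fin m → Fin n → ℝ)
    (lam : ℝ) (x : Fin m → ℝ) (y : Fin n → ℝ) : Prop :=
  (∑ i, x i ^ 2 = 1) ∧ (∑ j, y j ^ 2 = 1) ∧
  (∀ i, (∑ i1, ∑ j1, ∑ j2, A i1 j1 i j2 * x i1 * y j1 * y j2)
      + (∑ i2, ∑ j1, ∑ j2, A i j1 i2 j2 * y j1 * x i2 * y j2) = 2 * lam * x i) ∧
  (∀ j, (∑ i1, ∑ i2, ∑ j1, A i1 j1 i2 j * x i1 * y j1 * x i2)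
      + (∑ i1, ∑ i2, ∑ j2, A i1 j i2 j2 * x i1 * x i2 * y j2) = 2 * lam * y j)

/-- λ is an M-eigenvalue of A. -/
def IsMEigenvalue {m n : ℕ} (A : Fin m → Fin n → Fin m → Fin n → ℝ) (lam : ℝ) : Prop :=
  ∃ x y, IsMEigenpair A lam x y

/-- A is a positive semi-definite biquadratic tensor. -/
def BQPosSemidef {m n : ℕ} (A : Fin m → Fin n → Fin m → Fin n → ℝ) : Prop :=
  ∀ x y, 0 ≤ bqForm A x y

/-- A is a positive definite biquadratic tensor. -/
def BQPosDef {m n : ℕ} (A : Fin m → Fin n → Fin m → Fin n → ℝ) : Prop :=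
  ∀ x y, (∑ i, x i ^ 2 = 1) → (∑ j, y j ^ 2 = 1) → 0 < bqForm A x y

/-- The M-identity tensor. -/
def bqId {m n : ℕ} : Fin m → Fin n → Fin m → Fin n → ℝ :=
  fun i1 j1 i2 j2 => if i1 = i2 ∧ j1 = j2 then 1 else 0

/-- A is an M-biquadratic tensor: A = αI − B with B nonnegative and α ≥ λ_max(B). -/
def IsMBQTensor {m n : ℕ} (A : Fin m → Fin n → Fin m → Fin n → ℝ) : Prop :=
  ∃ (α : ℝ) (B : Fin m → Fin n → Fin m → Fin n → ℝ),
    (∀ i1 j1 i2 j2, 0 ≤ B i1 j1 i2 j2) ∧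
    (∀ i1 j1 i2 j2, A i1 j1 i2 j2 = α * bqId i1 j1 i2 j2 - B i1 j1 i2 j2) ∧
    (∀ mu, IsMEigenvalue B mu → mu ≤ α)

/-- A is a strong M-biquadratic tensor: A = αI − B with B nonnegative and α > λ_max(B). -/
def IsStrongMBQTensor {m n : ℕ} (A : Fin m → Fin n → Fin m → Fin n → ℝ) : Prop :=
  ∃ (α : ℝ) (B : Fin m → Fin n → Fin m → Fin n → ℝ),
    (∀ i1 j1 i2 j2, 0 ≤ B i1 j1 i2 j2) ∧
    (∀ i1 j1 i2 j2, A i1 j1 i2 j2 = α * bqId i1 j1 i2 j2 - B i1 j1 i2 j2) ∧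
    (∀ mu, IsMEigenvalue B mu → mu < α)

section AuxLemmas
open RealInnerProductSpace

section helpers
variable {M : Type*} [AddCommMonoid M]

lemma sum3_c12 {a b c : ℕ} (f : Fin a → Fin b → Fin c → M) :
    ∑ i, ∑ j, ∑ k, f i j k = ∑ j, ∑ i, ∑ k, f i j k := Finset.sum_comm

lemma sum3_c23 {a b c : ℕ} (f : Fin a → Fin b → Fin c → M) :
    ∑ i, ∑ j, ∑ k, f i j k = ∑ i, ∑ k, ∑ j, f i j k :=
  Finset.sum_congr rfl fun _ _ => Finset.sum_comm

lemma sum4_c12 {a b c d : ℕ} (f : Fin a → Fin b → Fin c → Fin d → M) :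
    ∑ i, ∑ j, ∑ k, ∑ l, f i j k l = ∑ j, ∑ i, ∑ k, ∑ l, f i j k l := Finset.sum_comm

lemma sum4_c23 {a b c d : ℕ} (f : Fin a → Fin b → Fin c → Fin d → M) :
    ∑ i, ∑ j, ∑ k, ∑ l, f i j k l = ∑ i, ∑ k, ∑ j, ∑ l, f i j k l :=
  Finset.sum_congr rfl fun _ _ => Finset.sum_comm

lemma sum4_c34 {a b c d : ℕ} (f : Fin a → Fin b → Fin c → Fin d → M) :
    ∑ i, ∑ j, ∑ k, ∑ l, f i j k l = ∑ i, ∑ j, ∑ l, ∑ k, f i j k l :=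
  Finset.sum_congr rfl fun _ _ => Finset.sum_congr rfl fun _ _ => Finset.sum_comm

end helpers

lemma euc_norm_one_iff {k : ℕ} (x : EuclideanSpace ℝ (Fin k)) :
    ‖x‖ = 1 ↔ ∑ i, x i ^ 2 = 1 := by
  rw [EuclideanSpace.norm_eq]
  constructor
  · intro h
    have := congrArg (· ^ 2) h
    simp only [one_pow] at this
    rw [Real.sq_sqrt (by positivity)] at this
    simpa [Real.norm_eq_abs, sq_abs] using this
  · intro h
    simp only [Real.norm_eq_abs, sq_abs, h]
    exact Real.sqrt_one

lemma rayleigh_step {k : ℕ} (D : Fin k → Fin k → ℝ) (hD : ∀ a b, D a b = D b a)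
    (x₀ : EuclideanSpace ℝ (Fin k)) (h1 : ‖x₀‖ = 1)
    (hmax : ∀ x : EuclideanSpace ℝ (Fin k), ‖x‖ = 1 →
      ∑ a, (∑ b, D a b * x b) * x a ≤ ∑ a, (∑ b, D a b * x₀ b) * x₀ a) :
    ∀ a, ∑ b, D a b * x₀ b = (∑ c, (∑ b, D c b * x₀ b) * x₀ c) * x₀ a := by
  let Tlin : EuclideanSpace ℝ (Fin k) →ₗ[ℝ] EuclideanSpace ℝ (Fin k) :=
    { toFun := fun x => WithLp.toLp 2 (fun a => ∑ b, D a b * x b : Fin k → ℝ)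
      map_add' := by
        intro x y
        ext a
        show ∑ b, D a b * (x b + y b) = (∑ b, D a b * x b) + (∑ b, D a b * y b)
        simp [mul_add, Finset.sum_add_distrib]
      map_smul' := by
        intro c x
        ext a
        show ∑ b, D a b * (c * x b) = c * ∑ b, D a b * x b
        rw [Finset.mul_sum]
        exact Finset.sum_congr rfl fun b _ => by ring }
  let T := LinearMap.toContinuousLinearMap Tlin
  have hTapp : ∀ (x : EuclideanSpace ℝ (Fin k)) (a : Fin k), T x a = ∑ b, D a b * x b :=
    fun x a => rfl
  have hinner : ∀ (x y : EuclideanSpace ℝ (Fin k)), ⟪x, y⟫ = ∑ a, x a * y a := by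
    intro x y
    simp [PiLp.inner_apply, RCLike.inner_apply, mul_comm]
  have hsym : IsSelfAdjoint T := by
    rw [ContinuousLinearMap.isSelfAdjoint_iff_isSymmetric]
    intro x y
    rw [hinner, hinner]
    show ∑ a, (∑ b, D a b * x b) * y a = ∑ a, x a * ∑ b, D a b * y b
    simp only [Finset.sum_mul, Finset.mul_sum]
    rw [Finset.sum_comm]
    exact Finset.sum_congr rfl fun a _ => Finset.sum_congr rfl fun b _ => by rw [hD]; ring
  have hre : ∀ x : EuclideanSpace ℝ (Fin k),
      T.reApplyInnerSelf x = ∑ a, (∑ b, D a b * x b) * x a := by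
    intro x
    rw [ContinuousLinearMap.reApplyInnerSelf_apply]
    have : ⟪T x, x⟫ = ∑ a, (∑ b, D a b * x b) * x a := by
      rw [hinner]
      exact Finset.sum_congr rfl fun a _ => by rw [hTapp]
    simpa using this
  have hx0ne : x₀ ≠ 0 := by intro h; rw [h] at h1; simp at h1
  have hextr : IsLocalExtrOn T.reApplyInnerSelf
      (Metric.sphere (0 : EuclideanSpace ℝ (Fin k)) ‖x₀‖) x₀ := by
    refine Or.inr (IsMaxOn.localize ?_)
    intro x hx
    simp only [Set.mem_setOf_eq, hre]
    rw [h1] at hx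
    exact hmax x (by simpa using hx)
  have key := hsym.eq_smul_self_of_isLocalExtrOn hextr
  intro a
  have := congrFun (congrArg (fun (v : EuclideanSpace ℝ (Fin k)) => (v : Fin k → ℝ)) key) a
  simp only at this
  rw [hTapp] at this
  rw [this]
  rw [ContinuousLinearMap.rayleighQuotient, hre, h1]
  norm_num

lemma exists_max_eigenpair {m n : ℕ} (hm : 0 < m) (hn : 0 < n)
    (A : Fin m → Fin n → Fin m → Fin n → ℝ) :
    ∃ (lam : ℝ) (x : Fin m → ℝ) (y : Fin n → ℝ), IsMEigenpair A lam x y ∧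
      ∀ x' y', (∑ i, x' i ^ 2 = 1) → (∑ j, y' j ^ 2 = 1) → bqForm A x' y' ≤ lam := by
  classical
  let f : EuclideanSpace ℝ (Fin m) × EuclideanSpace ℝ (Fin n) → ℝ :=
    fun p => bqForm A p.1 p.2
  have hcont : Continuous f := by
    apply continuous_finset_sum; intro i1 _
    apply continuous_finset_sum; intro j1 _
    apply continuous_finset_sum; intro i2 _
    apply continuous_finset_sum; intro j2 _
    exact ((((continuous_const.mul ((PiLp.continuous_apply 2 _ i1).comp continuous_fst)).mul
      ((PiLp.continuous_apply 2 _ j1).comp continuous_snd)).mul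
      ((PiLp.continuous_apply 2 _ i2).comp continuous_fst)).mul
      ((PiLp.continuous_apply 2 _ j2).comp continuous_snd))
  have hK : IsCompact ((Metric.sphere (0:EuclideanSpace ℝ (Fin m)) 1) ×ˢ
      (Metric.sphere (0:EuclideanSpace ℝ (Fin n)) 1)) :=
    (isCompact_sphere _ _).prod (isCompact_sphere _ _)
  have hne : ((Metric.sphere (0:EuclideanSpace ℝ (Fin m)) 1) ×ˢ
      (Metric.sphere (0:EuclideanSpace ℝ (Fin n)) 1)).Nonempty := by
    refine ⟨(EuclideanSpace.single ⟨0, hm⟩ (1:ℝ), EuclideanSpace.single ⟨0, hn⟩ (1:ℝ)), ?_, ?_⟩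
    · rw [mem_sphere_zero_iff_norm, EuclideanSpace.norm_single]; norm_num
    · rw [mem_sphere_zero_iff_norm, EuclideanSpace.norm_single]; norm_num
  obtain ⟨p₀, hp₀K, hp₀⟩ := hK.exists_isMaxOn hne hcont.continuousOn
  obtain ⟨x₀, y₀⟩ := p₀
  obtain ⟨hx₀s, hy₀s⟩ := Set.mem_prod.mp hp₀K
  have hx₀n : ‖x₀‖ = 1 := mem_sphere_zero_iff_norm.mp hx₀s
  have hy₀n : ‖y₀‖ = 1 := mem_sphere_zero_iff_norm.mp hy₀s
  have hmaxf : ∀ (x : EuclideanSpace ℝ (Fin m)) (y : EuclideanSpace ℝ (Fin n)),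
      ‖x‖ = 1 → ‖y‖ = 1 → bqForm A x y ≤ bqForm A x₀ y₀ := by
    intro x y hx hy
    rw [isMaxOn_iff] at hp₀
    exact hp₀ (x, y) (Set.mem_prod.mpr ⟨mem_sphere_zero_iff_norm.mpr hx,
      mem_sphere_zero_iff_norm.mpr hy⟩)
  set lam := bqForm A x₀ y₀ with hlam
  -- quadratic form identities
  have hqx : ∀ (x : Fin m → ℝ) (y : Fin n → ℝ),
      ∑ a, (∑ b, ((∑ j1, ∑ j2, A a j1 b j2 * y j1 * y j2)
        + (∑ j1, ∑ j2, A b j1 a j2 * y j1 * y j2)) * x b) * x a = 2 * bqForm A x y := by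
    intro x y
    have h1 : ∑ a, ∑ b, ∑ j1, ∑ j2, A a j1 b j2 * y j1 * y j2 * x b * x a = bqForm A x y := by
      unfold bqForm
      rw [sum4_c23]
      exact Finset.sum_congr rfl fun a _ => Finset.sum_congr rfl fun j1 _ =>
        Finset.sum_congr rfl fun b _ => Finset.sum_congr rfl fun j2 _ => by ring
    have h2 : ∑ a, ∑ b, ∑ j1, ∑ j2, A b j1 a j2 * y j1 * y j2 * x b * x a = bqForm A x y := by
      unfold bqForm
      rw [sum4_c12, sum4_c23]
      exact Finset.sum_congr rfl fun b _ => Finset.sum_congr rfl fun j1 _ =>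
        Finset.sum_congr rfl fun a _ => Finset.sum_congr rfl fun j2 _ => by ring
    simp only [add_mul, Finset.sum_mul, Finset.sum_add_distrib]
    rw [h1, h2]
    ring
  have hqy : ∀ (x : Fin m → ℝ) (y : Fin n → ℝ),
      ∑ c, (∑ d, ((∑ i1, ∑ i2, A i1 c i2 d * x i1 * x i2)
        + (∑ i1, ∑ i2, A i1 d i2 c * x i1 * x i2)) * y d) * y c = 2 * bqForm A x y := by
    intro x y
    have h1 : ∑ c, ∑ d, ∑ i1, ∑ i2, A i1 c i2 d * x i1 * x i2 * y d * y c = bqForm A x y := by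
      unfold bqForm
      rw [sum4_c23, sum4_c12, sum4_c34]
      exact Finset.sum_congr rfl fun i1 _ => Finset.sum_congr rfl fun c _ =>
        Finset.sum_congr rfl fun i2 _ => Finset.sum_congr rfl fun d _ => by ring
    have h2 : ∑ c, ∑ d, ∑ i1, ∑ i2, A i1 d i2 c * x i1 * x i2 * y d * y c = bqForm A x y := by
      unfold bqForm
      rw [sum4_c12, sum4_c23, sum4_c12, sum4_c34]
      exact Finset.sum_congr rfl fun i1 _ => Finset.sum_congr rfl fun d _ =>
        Finset.sum_congr rfl fun i2 _ => Finset.sum_congr rfl fun c _ => by ring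
    simp only [add_mul, Finset.sum_mul, Finset.sum_add_distrib]
    rw [h1, h2]
    ring
  -- x-direction eigen equation
  have hx_eig := rayleigh_step
    (fun a b => (∑ j1, ∑ j2, A a j1 b j2 * y₀ j1 * y₀ j2)
        + (∑ j1, ∑ j2, A b j1 a j2 * y₀ j1 * y₀ j2))
    (fun a b => add_comm _ _) x₀ hx₀n
    (by
      intro x hx
      rw [hqx x y₀, hqx x₀ y₀]
      have := hmaxf x y₀ hx hy₀n
      linarith)
  have hy_eig := rayleigh_step
    (fun c d => (∑ i1, ∑ i2, A i1 c i2 d * x₀ i1 * x₀ i2)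
        + (∑ i1, ∑ i2, A i1 d i2 c * x₀ i1 * x₀ i2))
    (fun c d => add_comm _ _) y₀ hy₀n
    (by
      intro y hy
      rw [hqy x₀ y, hqy x₀ y₀]
      have := hmaxf x₀ y hx₀n hy
      linarith)
  refine ⟨lam, x₀, y₀, ⟨(euc_norm_one_iff x₀).mp hx₀n, (euc_norm_one_iff y₀).mp hy₀n, ?_, ?_⟩, ?_⟩
  · intro i
    have h := hx_eig i
    rw [hqx x₀ y₀] at h
    have hL : ∑ b, ((∑ j1, ∑ j2, A i j1 b j2 * y₀ j1 * y₀ j2)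
        + (∑ j1, ∑ j2, A b j1 i j2 * y₀ j1 * y₀ j2)) * x₀ b
        = (∑ i1, ∑ j1, ∑ j2, A i1 j1 i j2 * x₀ i1 * y₀ j1 * y₀ j2)
        + (∑ i2, ∑ j1, ∑ j2, A i j1 i2 j2 * y₀ j1 * x₀ i2 * y₀ j2) := by
      simp only [add_mul, Finset.sum_mul, Finset.sum_add_distrib]
      have e1 : ∑ b, ∑ j1, ∑ j2, A i j1 b j2 * y₀ j1 * y₀ j2 * x₀ b
          = ∑ i2, ∑ j1, ∑ j2, A i j1 i2 j2 * y₀ j1 * x₀ i2 * y₀ j2 :=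
        Finset.sum_congr rfl fun b _ => Finset.sum_congr rfl fun j1 _ =>
          Finset.sum_congr rfl fun j2 _ => by ring
      have e2 : ∑ b, ∑ j1, ∑ j2, A b j1 i j2 * y₀ j1 * y₀ j2 * x₀ b
          = ∑ i1, ∑ j1, ∑ j2, A i1 j1 i j2 * x₀ i1 * y₀ j1 * y₀ j2 :=
        Finset.sum_congr rfl fun b _ => Finset.sum_congr rfl fun j1 _ =>
          Finset.sum_congr rfl fun j2 _ => by ring
      linarith [e1, e2]
    rw [hL] at h
    rw [h]
    try ring
  · intro j
    have h := hy_eig j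
    rw [hqy x₀ y₀] at h
    have hL : ∑ d, ((∑ i1, ∑ i2, A i1 j i2 d * x₀ i1 * x₀ i2)
        + (∑ i1, ∑ i2, A i1 d i2 j * x₀ i1 * x₀ i2)) * y₀ d
        = (∑ i1, ∑ i2, ∑ j1, A i1 j1 i2 j * x₀ i1 * y₀ j1 * x₀ i2)
        + (∑ i1, ∑ i2, ∑ j2, A i1 j i2 j2 * x₀ i1 * x₀ i2 * y₀ j2) := by
      simp only [add_mul, Finset.sum_mul, Finset.sum_add_distrib]
      have e1 : ∑ d, ∑ i1, ∑ i2, A i1 j i2 d * x₀ i1 * x₀ i2 * y₀ d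
          = ∑ i1, ∑ i2, ∑ j2, A i1 j i2 j2 * x₀ i1 * x₀ i2 * y₀ j2 := by
        rw [sum3_c12, sum3_c23]
        try exact Finset.sum_congr rfl fun i1 _ => Finset.sum_congr rfl fun i2 _ =>
          Finset.sum_congr rfl fun d _ => by ring
      have e2 : ∑ d, ∑ i1, ∑ i2, A i1 d i2 j * x₀ i1 * x₀ i2 * y₀ d
          = ∑ i1, ∑ i2, ∑ j1, A i1 j1 i2 j * x₀ i1 * y₀ j1 * x₀ i2 := by
        rw [sum3_c12, sum3_c23]
        try exact Finset.sum_congr rfl fun i1 _ => Finset.sum_congr rfl fun i2 _ =>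
          Finset.sum_congr rfl fun d _ => by ring
      linarith [e1, e2]
    rw [hL] at h
    rw [h]
    try ring
  · intro x' y' hx' hy'
    exact hmaxf (WithLp.toLp 2 x') (WithLp.toLp 2 y') ((euc_norm_one_iff (WithLp.toLp 2 x')).mpr hx')
      ((euc_norm_one_iff (WithLp.toLp 2 y')).mpr hy')

lemma id1 {m n : ℕ} (x : Fin m → ℝ) (y : Fin n → ℝ) (i : Fin m) :
    ∑ i1, ∑ j1, ∑ j2, bqId i1 j1 i j2 * x i1 * y j1 * y j2 = x i * ∑ j, y j ^ 2 := by
  simp [bqId, ite_and, Finset.mul_sum, sq]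
  try exact Finset.sum_congr rfl fun j _ => by ring
  try ring

lemma id2 {m n : ℕ} (x : Fin m → ℝ) (y : Fin n → ℝ) (i : Fin m) :
    ∑ i2, ∑ j1, ∑ j2, bqId i j1 i2 j2 * y j1 * x i2 * y j2 = x i * ∑ j, y j ^ 2 := by
  simp [bqId, ite_and, Finset.mul_sum, sq]
  try exact Finset.sum_congr rfl fun j _ => by ring
  try ring

lemma id3 {m n : ℕ} (x : Fin m → ℝ) (y : Fin n → ℝ) (j : Fin n) :
    ∑ i1, ∑ i2, ∑ j1, bqId i1 j1 i2 j * x i1 * y j1 * x i2 = y j * ∑ i, x i ^ 2 := by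
  simp [bqId, ite_and, Finset.mul_sum, sq]
  try exact Finset.sum_congr rfl fun i _ => by ring
  try ring

lemma id4 {m n : ℕ} (x : Fin m → ℝ) (y : Fin n → ℝ) (j : Fin n) :
    ∑ i1, ∑ i2, ∑ j2, bqId i1 j i2 j2 * x i1 * x i2 * y j2 = y j * ∑ i, x i ^ 2 := by
  simp [bqId, ite_and, Finset.mul_sum, sq]
  try exact Finset.sum_congr rfl fun i _ => by ring
  try ring

lemma idform {m n : ℕ} (x : Fin m → ℝ) (y : Fin n → ℝ) :
    ∑ i1, ∑ j1, ∑ i2, ∑ j2, bqId i1 j1 i2 j2 * x i1 * y j1 * x i2 * y j2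
      = (∑ i, x i ^ 2) * (∑ j, y j ^ 2) := by
  simp [bqId, ite_and, Finset.sum_mul, Finset.mul_sum, sq]
  try exact Finset.sum_congr rfl fun j _ => Finset.sum_congr rfl fun i _ => by ring
  try (rw [Finset.sum_comm]
       exact Finset.sum_congr rfl fun i _ => Finset.sum_congr rfl fun j _ => by ring)
  try ring

lemma bq_smul_x {m n : ℕ} (A : Fin m → Fin n → Fin m → Fin n → ℝ)
    (c : ℝ) (x : Fin m → ℝ) (y : Fin n → ℝ) :
    bqForm A (fun i => c * x i) y = c ^ 2 * bqForm A x y := by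
  unfold bqForm
  rw [Finset.mul_sum]
  refine Finset.sum_congr rfl fun i1 _ => ?_
  rw [Finset.mul_sum]
  refine Finset.sum_congr rfl fun j1 _ => ?_
  rw [Finset.mul_sum]
  refine Finset.sum_congr rfl fun i2 _ => ?_
  rw [Finset.mul_sum]
  exact Finset.sum_congr rfl fun j2 _ => by ring

lemma bq_smul_y {m n : ℕ} (A : Fin m → Fin n → Fin m → Fin n → ℝ)
    (c : ℝ) (x : Fin m → ℝ) (y : Fin n → ℝ) :
    bqForm A x (fun j => c * y j) = c ^ 2 * bqForm A x y := by
  unfold bqForm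
  rw [Finset.mul_sum]
  refine Finset.sum_congr rfl fun i1 _ => ?_
  rw [Finset.mul_sum]
  refine Finset.sum_congr rfl fun j1 _ => ?_
  rw [Finset.mul_sum]
  refine Finset.sum_congr rfl fun i2 _ => ?_
  rw [Finset.mul_sum]
  exact Finset.sum_congr rfl fun j2 _ => by ring

lemma eig_val {m n : ℕ} {A : Fin m → Fin n → Fin m → Fin n → ℝ} {lam : ℝ}
    {x : Fin m → ℝ} {y : Fin n → ℝ} (h : IsMEigenpair A lam x y) :
    bqForm A x y = lam := by
  obtain ⟨hx, hy, h1, _⟩ := h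
  have hc : ∑ i, ((∑ i1, ∑ j1, ∑ j2, A i1 j1 i j2 * x i1 * y j1 * y j2)
      + (∑ i2, ∑ j1, ∑ j2, A i j1 i2 j2 * y j1 * x i2 * y j2)) * x i
      = ∑ i, (2 * lam * x i) * x i :=
    Finset.sum_congr rfl fun i _ => by rw [h1 i]
  have hR : ∑ i, (2 * lam * x i) * x i = 2 * lam := by
    have e : ∑ i, (2 * lam * x i) * x i = 2 * lam * ∑ i, x i ^ 2 := by
      rw [Finset.mul_sum]
      exact Finset.sum_congr rfl fun i _ => by ring
    rw [e, hx, mul_one]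
  have hL : ∑ i, ((∑ i1, ∑ j1, ∑ j2, A i1 j1 i j2 * x i1 * y j1 * y j2)
      + (∑ i2, ∑ j1, ∑ j2, A i j1 i2 j2 * y j1 * x i2 * y j2)) * x i
      = 2 * bqForm A x y := by
    simp only [add_mul, Finset.sum_mul, Finset.sum_add_distrib]
    have Sa : ∑ i, ∑ i1, ∑ j1, ∑ j2, A i1 j1 i j2 * x i1 * y j1 * y j2 * x i
        = bqForm A x y := by
      unfold bqForm
      rw [sum4_c12, sum4_c23]
      exact Finset.sum_congr rfl fun i1 _ => Finset.sum_congr rfl fun j1 _ =>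
        Finset.sum_congr rfl fun i _ => Finset.sum_congr rfl fun j2 _ => by ring
    have Sb : ∑ i, ∑ i2, ∑ j1, ∑ j2, A i j1 i2 j2 * y j1 * x i2 * y j2 * x i
        = bqForm A x y := by
      unfold bqForm
      rw [sum4_c23]
      exact Finset.sum_congr rfl fun i _ => Finset.sum_congr rfl fun j1 _ =>
        Finset.sum_congr rfl fun i2 _ => Finset.sum_congr rfl fun j2 _ => by ring
    linarith [Sa, Sb]
  linarith [hc, hR, hL]

lemma bq_linear {m n : ℕ} {A B : Fin m → Fin n → Fin m → Fin n → ℝ} {c : ℝ}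
    (hAB : ∀ i1 j1 i2 j2, A i1 j1 i2 j2 = c * bqId i1 j1 i2 j2 - B i1 j1 i2 j2)
    (x : Fin m → ℝ) (y : Fin n → ℝ) :
    bqForm A x y = c * ((∑ i, x i ^ 2) * (∑ j, y j ^ 2)) - bqForm B x y := by
  have hpt : ∀ i1 j1 i2 j2, A i1 j1 i2 j2 * x i1 * y j1 * x i2 * y j2
      = c * (bqId i1 j1 i2 j2 * x i1 * y j1 * x i2 * y j2)
        - B i1 j1 i2 j2 * x i1 * y j1 * x i2 * y j2 :=
    fun i1 j1 i2 j2 => by rw [hAB]; ring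
  unfold bqForm
  simp only [hpt, Finset.sum_sub_distrib, ← Finset.mul_sum]
  rw [idform]

lemma eig_shift {m n : ℕ} {A B : Fin m → Fin n → Fin m → Fin n → ℝ} (c : ℝ)
    (hAB : ∀ i1 j1 i2 j2, A i1 j1 i2 j2 = c * bqId i1 j1 i2 j2 - B i1 j1 i2 j2)
    {mu : ℝ} {x : Fin m → ℝ} {y : Fin n → ℝ} (h : IsMEigenpair B mu x y) :
    IsMEigenpair A (c - mu) x y := by
  obtain ⟨hx, hy, h1, h2⟩ := h
  refine ⟨hx, hy, ?_, ?_⟩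
  · intro i
    have e1 : ∑ i1, ∑ j1, ∑ j2, A i1 j1 i j2 * x i1 * y j1 * y j2
        = c * (x i * ∑ j, y j ^ 2) - ∑ i1, ∑ j1, ∑ j2, B i1 j1 i j2 * x i1 * y j1 * y j2 := by
      have hpt : ∀ i1 j1 j2, A i1 j1 i j2 * x i1 * y j1 * y j2
          = c * (bqId i1 j1 i j2 * x i1 * y j1 * y j2) - B i1 j1 i j2 * x i1 * y j1 * y j2 :=
        fun i1 j1 j2 => by rw [hAB]; ring
      simp only [hpt, Finset.sum_sub_distrib, ← Finset.mul_sum]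
      rw [id1]
    have e2 : ∑ i2, ∑ j1, ∑ j2, A i j1 i2 j2 * y j1 * x i2 * y j2
        = c * (x i * ∑ j, y j ^ 2) - ∑ i2, ∑ j1, ∑ j2, B i j1 i2 j2 * y j1 * x i2 * y j2 := by
      have hpt : ∀ i2 j1 j2, A i j1 i2 j2 * y j1 * x i2 * y j2
          = c * (bqId i j1 i2 j2 * y j1 * x i2 * y j2) - B i j1 i2 j2 * y j1 * x i2 * y j2 :=
        fun i2 j1 j2 => by rw [hAB]; ring
      simp only [hpt, Finset.sum_sub_distrib, ← Finset.mul_sum]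
      rw [id2]
    rw [e1, e2, hy]
    have := h1 i
    linarith [this]
  · intro j
    have e1 : ∑ i1, ∑ i2, ∑ j1, A i1 j1 i2 j * x i1 * y j1 * x i2
        = c * (y j * ∑ i, x i ^ 2) - ∑ i1, ∑ i2, ∑ j1, B i1 j1 i2 j * x i1 * y j1 * x i2 := by
      have hpt : ∀ i1 i2 j1, A i1 j1 i2 j * x i1 * y j1 * x i2
          = c * (bqId i1 j1 i2 j * x i1 * y j1 * x i2) - B i1 j1 i2 j * x i1 * y j1 * x i2 :=
        fun i1 i2 j1 => by rw [hAB]; ring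
      simp only [hpt, Finset.sum_sub_distrib, ← Finset.mul_sum]
      rw [id3]
    have e2 : ∑ i1, ∑ i2, ∑ j2, A i1 j i2 j2 * x i1 * x i2 * y j2
        = c * (y j * ∑ i, x i ^ 2) - ∑ i1, ∑ i2, ∑ j2, B i1 j i2 j2 * x i1 * x i2 * y j2 := by
      have hpt : ∀ i1 i2 j2, A i1 j i2 j2 * x i1 * x i2 * y j2
          = c * (bqId i1 j i2 j2 * x i1 * x i2 * y j2) - B i1 j i2 j2 * x i1 * x i2 * y j2 :=
        fun i1 i2 j2 => by rw [hAB]; ring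
      simp only [hpt, Finset.sum_sub_distrib, ← Finset.mul_sum]
      rw [id4]
    rw [e1, e2, hx]
    have := h2 j
    linarith [this]

lemma bq_nonneg_of_unit {m n : ℕ} {A : Fin m → Fin n → Fin m → Fin n → ℝ}
    (h : ∀ x y, (∑ i, x i ^ 2 = 1) → (∑ j, y j ^ 2 = 1) → 0 ≤ bqForm A x y)
    (x : Fin m → ℝ) (y : Fin n → ℝ) : 0 ≤ bqForm A x y := by
  by_cases hx0 : ∑ i, x i ^ 2 = 0
  · have hx' : ∀ i, x i = 0 := by
      intro i
      have := (Finset.sum_eq_zero_iff_of_nonneg (fun i _ => sq_nonneg (x i))).mp hx0 i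
        (Finset.mem_univ i)
      exact (pow_eq_zero_iff two_ne_zero).mp this
    have : bqForm A x y = 0 := by unfold bqForm; simp [hx']
    rw [this]
  · by_cases hy0 : ∑ j, y j ^ 2 = 0
    · have hy' : ∀ j, y j = 0 := by
        intro j
        have := (Finset.sum_eq_zero_iff_of_nonneg (fun j _ => sq_nonneg (y j))).mp hy0 j
          (Finset.mem_univ j)
        exact (pow_eq_zero_iff two_ne_zero).mp this
      have : bqForm A x y = 0 := by unfold bqForm; simp [hy']
      rw [this]
    · have hxpos : 0 < ∑ i, x i ^ 2 :=
        lt_of_le_of_ne (Finset.sum_nonneg fun i _ => sq_nonneg _) (Ne.symm hx0)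
      have hypos : 0 < ∑ j, y j ^ 2 :=
        lt_of_le_of_ne (Finset.sum_nonneg fun j _ => sq_nonneg _) (Ne.symm hy0)
      set s := Real.sqrt (∑ i, x i ^ 2) with hs
      set t := Real.sqrt (∑ j, y j ^ 2) with ht
      have hspos : 0 < s := Real.sqrt_pos.mpr hxpos
      have htpos : 0 < t := Real.sqrt_pos.mpr hypos
      have hs2 : s ^ 2 = ∑ i, x i ^ 2 := Real.sq_sqrt hxpos.le
      have ht2 : t ^ 2 = ∑ j, y j ^ 2 := Real.sq_sqrt hypos.le
      have hux : ∑ i, (x i / s) ^ 2 = 1 := by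
        simp only [div_pow, ← Finset.sum_div, hs2]
        exact div_self hx0
      have huy : ∑ j, (y j / t) ^ 2 = 1 := by
        simp only [div_pow, ← Finset.sum_div, ht2]
        exact div_self hy0
      have hxeq : x = fun i => s * (x i / s) := funext fun i => by
        field_simp
      have hyeq : y = fun j => t * (y j / t) := funext fun j => by
        field_simp
      have : bqForm A x y = s ^ 2 * (t ^ 2 * bqForm A (fun i => x i / s) (fun j => y j / t)) := by
        conv_lhs => rw [hxeq, hyeq]
        rw [bq_smul_x, bq_smul_y]
      rw [this]
      have := h _ _ hux huy
      positivity

end AuxLemmas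

/-- A Z-biquadratic tensor is positive semi-definite iff it is an M-biquadratic tensor,
and positive definite iff it is a strong M-biquadratic tensor. -/
theorem zbq_posSemidef_iff_M {m n : ℕ} (hm : 2 ≤ m) (hn : 2 ≤ n)
    (A : Fin m → Fin n → Fin m → Fin n → ℝ)
    (hZ : ∀ i1 j1 i2 j2, ¬(i1 = i2 ∧ j1 = j2) → A i1 j1 i2 j2 ≤ 0) :
    (BQPosSemidef A ↔ IsMBQTensor A) ∧ (BQPosDef A ↔ IsStrongMBQTensor A) := by
  have hm0 : 0 < m := lt_of_lt_of_le two_pos hm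
  have hn0 : 0 < n := lt_of_lt_of_le two_pos hn
  have hne : (Finset.univ : Finset (Fin m × Fin n)).Nonempty :=
    ⟨(⟨0, hm0⟩, ⟨0, hn0⟩), Finset.mem_univ _⟩
  set γ := Finset.sup' Finset.univ hne (fun p : Fin m × Fin n => A p.1 p.2 p.1 p.2) with hγ
  have hγd : ∀ i j, A i j i j ≤ γ := fun i j =>
    Finset.le_sup' (f := fun p : Fin m × Fin n => A p.1 p.2 p.1 p.2) (Finset.mem_univ (i, j))
  set B : Fin m → Fin n → Fin m → Fin n → ℝ :=
    fun i1 j1 i2 j2 => γ * bqId i1 j1 i2 j2 - A i1 j1 i2 j2 with hB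
  have hABγ : ∀ i1 j1 i2 j2, A i1 j1 i2 j2 = γ * bqId i1 j1 i2 j2 - B i1 j1 i2 j2 :=
    fun i1 j1 i2 j2 => by rw [hB]; ring
  have hBnn : ∀ i1 j1 i2 j2, 0 ≤ B i1 j1 i2 j2 := by
    intro i1 j1 i2 j2
    have hBval : B i1 j1 i2 j2 = γ * bqId i1 j1 i2 j2 - A i1 j1 i2 j2 := rfl
    rw [hBval]
    by_cases h : i1 = i2 ∧ j1 = j2
    · have h1 : bqId i1 j1 i2 j2 = 1 := if_pos h
      rw [h1, mul_one]
      obtain ⟨rfl, rfl⟩ := h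
      have := hγd i1 j1
      linarith
    · have h1 : bqId i1 j1 i2 j2 = 0 := if_neg h
      rw [h1, mul_zero]
      have := hZ i1 j1 i2 j2 h
      linarith
  have hshift : ∀ mu, IsMEigenvalue B mu → ∃ x y, IsMEigenpair A (γ - mu) x y := by
    rintro mu ⟨x, y, hp⟩
    exact ⟨x, y, eig_shift γ hABγ hp⟩
  constructor
  · constructor
    · intro hPSD
      refine ⟨γ, B, hBnn, hABγ, ?_⟩
      rintro mu hmu
      obtain ⟨x, y, hp⟩ := hshift mu hmu
      have hv := eig_val hp
      have h0 := hPSD x y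
      linarith
    · rintro ⟨α, B', hB'nn, hAB', hbd⟩
      obtain ⟨μ, xs, ys, hpair, hmax⟩ := exists_max_eigenpair hm0 hn0 B'
      have hμ : μ ≤ α := hbd μ ⟨xs, ys, hpair⟩
      apply bq_nonneg_of_unit
      intro x y hx hy
      rw [bq_linear hAB' x y, hx, hy]
      have hb := hmax x y hx hy
      nlinarith
  · constructor
    · intro hPD
      refine ⟨γ, B, hBnn, hABγ, ?_⟩
      rintro mu hmu
      obtain ⟨x, y, hp⟩ := hshift mu hmu
      have hv := eig_val hp
      have h0 := hPD x y hp.1 hp.2.1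
      linarith
    · rintro ⟨α, B', hB'nn, hAB', hbd⟩
      obtain ⟨μ, xs, ys, hpair, hmax⟩ := exists_max_eigenpair hm0 hn0 B'
      have hμ : μ < α := hbd μ ⟨xs, ys, hpair⟩
      intro x y hx hy
      rw [bq_linear hAB' x y, hx, hy]
      have hb := hmax x y hx hy
      nlinarith
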